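/- Let A ∈ M_2(ℂ). Every point v = (x*(Re A)x, x*(Im A)x, x*A*Ax) with ‖x‖ = 1 satisfies the quadric equation a_1v_1² + a_2v_2² + v_3² + a_4v_1v_2 + a_5v_1v_3 + a_6v_2v_3 + a_7v_1 + a_8v_2 + a_9v_3 + a_10 = 0, where a_1 = tr(A*A) + 2Re(det A), a_2 = tr(A*A) − 2Re(det A), a_4 = 4 Im(det A), a_5 = −2Re(tr A), a_6 = −2Im(tr A), a_7 = −2Re(det A · tr A*), a_8 = −2Im(det A · tr A*), a_9 = |tr A|² − tr(A*A), a_10 = |det A|². -/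

import Mathlib

open Matrix

set_option maxHeartbeats 2000000 in
set_option maxRecDepth 4000 in

theorem stmt13 (A : Matrix (Fin 2) (Fin 2) ℂ)
    (x : EuclideanSpace ℂ (Fin 2)) (hx : ‖x‖ = 1) :
    let v1 := (inner ℂ x (Matrix.toEuclideanLin A x) : ℂ).re
    let v2 := (inner ℂ x (Matrix.toEuclideanLin A x) : ℂ).im
    let v3 := ‖Matrix.toEuclideanLin A x‖ ^ 2
    let a1 := ((Aᴴ * A).trace).re + 2 * A.det.re
    let a2 := ((Aᴴ * A).trace).re - 2 * A.det.re
    let a4 := 4 * A.det.im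
    let a5 := -2 * A.trace.re
    let a6 := -2 * A.trace.im
    let a7 := -2 * (A.det * (starRingEnd ℂ A.trace)).re
    let a8 := -2 * (A.det * (starRingEnd ℂ A.trace)).im
    let a9 := ‖A.trace‖ ^ 2 - ((Aᴴ * A).trace).re
    let a10 := ‖A.det‖ ^ 2
    a1 * v1 ^ 2 + a2 * v2 ^ 2 + v3 ^ 2 + a4 * v1 * v2 + a5 * v1 * v3 +
      a6 * v2 * v3 + a7 * v1 + a8 * v2 + a9 * v3 + a10 = 0 := by
  have hs : (x 0).re^2 + (x 0).im^2 + (x 1).re^2 + (x 1).im^2 = 1 := by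
    rw [EuclideanSpace.norm_eq, Real.sqrt_eq_one] at hx
    simpa [Fin.sum_univ_two, Complex.sq_norm, Complex.normSq_apply, pow_two,
      ← fun z : ℂ => (Complex.normSq_eq_norm_sq z).trans (pow_two _), add_assoc] using hx
  have hv : (inner ℂ x (Matrix.toEuclideanLin A x) : ℂ) =
      (starRingEnd ℂ) (x 0) * (A 0 0 * x 0 + A 0 1 * x 1) +
      (starRingEnd ℂ) (x 1) * (A 1 0 * x 0 + A 1 1 * x 1) := by
    simp [Matrix.toEuclideanLin_apply, PiLp.inner_apply, Fin.sum_univ_two, Matrix.mulVec,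
      dotProduct, RCLike.inner_apply, mul_comm]
  have hn : ‖Matrix.toEuclideanLin A x‖^2 =
      Complex.normSq (A 0 0 * x 0 + A 0 1 * x 1) + Complex.normSq (A 1 0 * x 0 + A 1 1 * x 1) := by
    rw [EuclideanSpace.norm_eq, Real.sq_sqrt (by positivity)]
    simp [Fin.sum_univ_two, Matrix.toEuclideanLin_apply, Matrix.mulVec, dotProduct,
      Complex.sq_norm]
  intro v1 v2 v3 a1 a2 a4 a5 a6 a7 a8 a9 a10
  simp only [v1, v2, v3, a1, a2, a4, a5, a6, a7, a8, a9, a10, hv, hn,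
    Matrix.trace_fin_two, Matrix.det_fin_two, Matrix.mul_apply, Matrix.conjTranspose_apply,
    Fin.sum_univ_two, Complex.sq_norm, Complex.normSq_apply]
  simp only [Complex.add_re, Complex.add_im, Complex.sub_re, Complex.sub_im, Complex.mul_re,
    Complex.mul_im, Complex.conj_re, Complex.conj_im, RingHom.coe_coe, RCLike.star_def,
    Complex.ofReal_re, Complex.ofReal_im]
  linear_combination ((-(((-2*((((((((A 0 0).re)*((A 1 1).re) - ((A 0 0).im)*((A 1 1).im))) - ((((A 0 1).re)*((A 1 0).re) - ((A 0 1).im)*((A 1 0).im)))))*((((A 0 0).re) + ((A 1 1).re))) - ((((((A 0 0).re)*((A 1 1).im) + ((A 0 0).im)*((A 1 1).re))) - ((((A 0 1).re)*((A 1 0).im) + ((A 0 1).im)*((A 1 0).re)))))*((-((((A 0 0).im) + ((A 1 1).im)))))))))*((((((x 0).re)*((((((A 0 0).re)*((x 0).re) - ((A 0 0).im)*((x 0).im))) + ((((A 0 1).re)*((x 1).re) - ((A 0 1).im)*((x 1).im))))) - ((-((x 0).im)))*((((((A 0 0).re)*((x 0).im) + ((A 0 0).im)*((x 0).re))) + ((((A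 0 1).re)*((x 1).im) + ((A 0 1).im)*((x 1).re))))))) + ((((x 1).re)*((((((A 1 0).re)*((x 0).re) - ((A 1 0).im)*((x 0).im))) + ((((A 1 1).re)*((x 1).re) - ((A 1 1).im)*((x 1).im))))) - ((-((x 1).im)))*((((((A 1 0).re)*((x 0).im) + ((A 1 0).im)*((x 0).re))) + ((((A 1 1).re)*((x 1).im) + ((A 1 1).im)*((x 1).re))))))))) + ((-2*((((((((A 0 0).re)*((A 1 1).re) - ((A 0 0).im)*((A 1 1).im))) - ((((A 0 1).re)*((A 1 0).re) - ((A 0 1).im)*((A 1 0).im)))))*((-((((A 0 0).im) + ((A 1 1).im))))) + ((((((A 0 0).re)*((A 1 1).im) + ((A 0 0).im)*((A 1 1).re))) - ((((A 0 1).re)*((A 1 0).im) + ((A 0 1).im)*((A 1 0).re)))))*((((A 0 0).re) + ((A 1 1).re)))))))*((((((x 0).re)*((((((A 0 0).re)*((x 0).im) + ((A 0 0).im)*((x 0).re))) + ((((A 0 1).re)*((x 1).im) + ((A 0 1).im)*((x 1).re))))) + ((-((x 0).im)))*((((((A 0 0).re)*((x 0).re) - ((A 0 0).im)*((x 0).im)))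 + ((((A 0 1).re)*((x 1).re) - ((A 0 1).im)*((x 1).im))))))) + ((((x 1).re)*((((((A 1 0).re)*((x 0).im) + ((A 1 0).im)*((x 0).re))) + ((((A 1 1).re)*((x 1).im) + ((A 1 1).im)*((x 1).re))))) + ((-((x 1).im)))*((((((A 1 0).re)*((x 0).re) - ((A 1 0).im)*((x 0).im))) + ((((A 1 1).re)*((x 1).re) - ((A 1 1).im)*((x 1).im))))))))) + (((((((A 0 0).re) + ((A 1 1).re)))^2 + ((((A 0 0).im) + ((A 1 1).im)))^2) - ((((A 0 0).re)^2 + ((A 0 0).im)^2) + (((A 0 1).re)^2 + ((A 0 1).im)^2) + (((A 1 0).re)^2 + ((A 1 0).im)^2) + (((A 1 1).re)^2 + ((A 1 1).im)^2))))*((((((((A 0 0).re)*((x 0).re) - ((A 0 0).im)*((x 0).im))) + ((((A 0 1).re)*((x 1).re) - ((A 0 1).im)*((x 1).im)))))^2 + ((((((A 0 0).re)*((x 0).im) + ((A 0 0).im)*((x 0).re))) + ((((A 0 1).re)*((x 1).im) + ((A 0 1).im)*((x 1).re)))))^2) + (((((((A 1 0).re)*((x 0).re) - ((A 1 0).im)*((x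 0).im))) + ((((A 1 1).re)*((x 1).re) - ((A 1 1).im)*((x 1).im)))))^2 + ((((((A 1 0).re)*((x 0).im) + ((A 1 0).im)*((x 0).re))) + ((((A 1 1).re)*((x 1).im) + ((A 1 1).im)*((x 1).re)))))^2)) + (1 + ((((x 0).re)^2 + ((x 0).im)^2) + (((x 1).re)^2 + ((x 1).im)^2)))*(((((((A 0 0).re)*((A 1 1).re) - ((A 0 0).im)*((A 1 1).im))) - ((((A 0 1).re)*((A 1 0).re) - ((A 0 1).im)*((A 1 0).im)))))^2 + ((((((A 0 0).re)*((A 1 1).im) + ((A 0 0).im)*((A 1 1).re))) - ((((A 0 1).re)*((A 1 0).im) + ((A 0 1).im)*((A 1 0).re)))))^2)))) * hs
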